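/- Let F¹ = (f¹_i)_{i∈I} ⊆ H₁ and F² = (f²_i)_{i∈I} ⊆ H₂ be frames indexed by I that are orthogonal in the sense of supersets. Then the superset F¹ ⊕ F² = (f¹_i ⊕ f²_i)_{i∈I} is a frame for H₁ ⊕ H₂ and μ(F¹ ⊕ F²)(p) = μ(F¹)(p) + μ(F²)(p) for every free ultrafilter p on ℕ. -/

import Mathlib

open Filter Topology

noncomputable section

/-- A family `f : ι → H` is a frame for the complex Hilbert space `H`. -/
def IsFrame {ι : Type*} {H : Type*} [NormedAddCommGroup H] [InnerProductSpace ℂ H]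
    (f : ι → H) : Prop :=
  ∃ A B : ℝ, 0 < A ∧ 0 < B ∧ ∀ h : H,
    A * ‖h‖ ^ 2 ≤ ∑' i, ‖(inner ℂ h (f i) : ℂ)‖ ^ 2 ∧
    ∑' i, ‖(inner ℂ h (f i) : ℂ)‖ ^ 2 ≤ B * ‖h‖ ^ 2

/-- The frame operator `S h = ∑_i ⟨h, f i⟩ f i` (paper's first-linear convention). -/
def frameOp {ι : Type*} {H : Type*} [NormedAddCommGroup H] [InnerProductSpace ℂ H]
    (f : ι → H) (h : H) : H :=
  ∑' i, (inner ℂ (f i) h : ℂ) • f i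

/-- `ftil` is the canonical dual frame of `f`: `S (ftil i) = f i`, i.e. `ftil i = S⁻¹ (f i)`. -/
def IsCanonicalDual {ι : Type*} {H : Type*} [NormedAddCommGroup H] [InnerProductSpace ℂ H]
    (f ftil : ι → H) : Prop :=
  ∀ i, frameOp f (ftil i) = f i

/-- `b n = ∑_{i ∈ Iₙ} ⟨f i, f̃ i⟩` (a real number; we take the real part). -/
def bSeq {ι : Type*} {H : Type*} [NormedAddCommGroup H] [InnerProductSpace ℂ H]
    (In : ℕ → Finset ι) (f ftil : ι → H) (n : ℕ) : ℝ :=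
  (∑ i ∈ In n, (inner ℂ (f i) (ftil i) : ℂ)).re

/-- `x ≈ y` : `(xₙ − yₙ)/|Iₙ| → 0`. -/
def SeqApprox {ι : Type*} (In : ℕ → Finset ι) (x y : ℕ → ℝ) : Prop :=
  Tendsto (fun n => (x n - y n) / ((In n).card : ℝ)) atTop (nhds 0)

/-- The limit of a real sequence along an ultrafilter `p` on `ℕ` (the `p`-limit;
for bounded sequences this limit exists and `limUnder` selects it). -/
def ulim (p : Ultrafilter ℕ) (x : ℕ → ℝ) : ℝ :=
  limUnder (p : Filter ℕ) x

/-- A free ultrafilter is one containing no finite set, i.e. one finer than `cofinite`. -/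
def Ultrafilter.IsFree (p : Ultrafilter ℕ) : Prop :=
  (p : Filter ℕ) ≤ Filter.cofinite

/-- The ultrafilter frame measure function `μ(F)(p) = p-lim bₙ(F)/|Iₙ|`. -/
def muU {ι : Type*} {H : Type*} [NormedAddCommGroup H] [InnerProductSpace ℂ H]
    (In : ℕ → Finset ι) (f ftil : ι → H) (p : Ultrafilter ℕ) : ℝ :=
  ulim p (fun n => bSeq In f ftil n / ((In n).card : ℝ))

/-- Two frames indexed by `I` are orthogonal in the sense of supersets:
`∑_i ⟨g, f¹_i⟩⟨f²_i, h⟩ = 0` for all `g ∈ H₁`, `h ∈ H₂` (paper's first-linear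
convention, so `⟨g, f¹_i⟩ = ⟪f¹_i, g⟫` and `⟨f²_i, h⟩ = ⟪h, f²_i⟫` in Mathlib's). -/
def SupersetOrthogonal {ι : Type*}
    {H₁ : Type*} [NormedAddCommGroup H₁] [InnerProductSpace ℂ H₁]
    {H₂ : Type*} [NormedAddCommGroup H₂] [InnerProductSpace ℂ H₂]
    (f₁ : ι → H₁) (f₂ : ι → H₂) : Prop :=
  ∀ (g : H₁) (h : H₂), ∑' i, (inner ℂ (f₁ i) g : ℂ) * (inner ℂ h (f₂ i) : ℂ) = 0

/-- The superset `F¹ ⊕ F² = (f¹_i ⊕ f²_i)_i` in the Hilbert direct sum `H₁ ⊕ H₂`. -/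
def supersetFam {ι : Type*}
    {H₁ : Type*} [NormedAddCommGroup H₁] [InnerProductSpace ℂ H₁]
    {H₂ : Type*} [NormedAddCommGroup H₂] [InnerProductSpace ℂ H₂]
    (f₁ : ι → H₁) (f₂ : ι → H₂) (i : ι) : WithLp 2 (H₁ × H₂) :=
  (WithLp.equiv 2 (H₁ × H₂)).symm (f₁ i, f₂ i)

open scoped InnerProductSpace ComplexConjugate

section Aux

variable {ι : Type*} {H : Type*} [NormedAddCommGroup H] [InnerProductSpace ℂ H]

lemma frame_summable {f : ι → H} (hf : IsFrame f) (h : H) :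
    Summable (fun i => ‖(inner ℂ h (f i) : ℂ)‖ ^ 2) := by
  obtain ⟨A, B, hA, hB, hfr⟩ := hf
  rcases eq_or_ne h 0 with rfl | hne
  · simpa using summable_zero
  · by_contra hs
    have h1 := (hfr h).1
    rw [tsum_eq_zero_of_not_summable hs] at h1
    have : 0 < ‖h‖ := norm_pos_iff.mpr hne
    nlinarith [mul_pos hA (pow_pos this 2)]

lemma frame_summable' {f : ι → H} (hf : IsFrame f) (h : H) :
    Summable (fun i => ‖(inner ℂ (f i) h : ℂ)‖ ^ 2) := by
  simpa only [norm_inner_symm] using frame_summable hf h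

lemma synthesis_bound {f : ι → H} {B : ℝ} (hB : 0 < B)
    (hsum : ∀ h : H, Summable (fun i => ‖(inner ℂ h (f i) : ℂ)‖ ^ 2))
    (hub : ∀ h : H, ∑' i, ‖(inner ℂ h (f i) : ℂ)‖ ^ 2 ≤ B * ‖h‖ ^ 2)
    (c : ι → ℂ) (t : Finset ι) :
    ‖∑ i ∈ t, c i • f i‖ ^ 2 ≤ B * ∑ i ∈ t, ‖c i‖ ^ 2 := by
  set v := ∑ i ∈ t, c i • f i with hv
  have h1 : (‖v‖ ^ 2 : ℝ) = Complex.re ⟪v, v⟫_ℂ := (@inner_self_eq_norm_sq ℂ _ _ _ _ v).symm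
  have h2 : ⟪v, v⟫_ℂ = ∑ i ∈ t, conj (c i) * ⟪f i, v⟫_ℂ := by
    rw [hv, sum_inner]
    exact Finset.sum_congr rfl fun i _ => inner_smul_left _ _ _
  have h3 : ‖v‖ ^ 2 ≤ ∑ i ∈ t, ‖c i‖ * ‖⟪f i, v⟫_ℂ‖ := by
    rw [h1, h2, Complex.re_sum]
    refine Finset.sum_le_sum fun i _ => ?_
    calc Complex.re (conj (c i) * ⟪f i, v⟫_ℂ) ≤ ‖conj (c i) * ⟪f i, v⟫_ℂ‖ := Complex.re_le_norm _
    _ = ‖c i‖ * ‖⟪f i, v⟫_ℂ‖ := by rw [norm_mul, RCLike.norm_conj]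
  have h4 : (∑ i ∈ t, ‖c i‖ * ‖⟪f i, v⟫_ℂ‖) ^ 2 ≤
      (∑ i ∈ t, ‖c i‖ ^ 2) * ∑ i ∈ t, ‖⟪f i, v⟫_ℂ‖ ^ 2 :=
    Finset.sum_mul_sq_le_sq_mul_sq t _ _
  have h5 : ∑ i ∈ t, ‖⟪f i, v⟫_ℂ‖ ^ 2 ≤ B * ‖v‖ ^ 2 := by
    refine le_trans ?_ (hub v)
    have : ∀ i ∈ t, ‖⟪f i, v⟫_ℂ‖ ^ 2 = ‖⟪v, f i⟫_ℂ‖ ^ 2 := fun i _ => by rw [norm_inner_symm]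
    rw [Finset.sum_congr rfl this]
    exact Summable.sum_le_tsum t (fun i _ => by positivity) (hsum v)
  have hc2 : (0:ℝ) ≤ ∑ i ∈ t, ‖c i‖ ^ 2 := Finset.sum_nonneg fun i _ => by positivity
  rcases eq_or_ne v 0 with hv0 | hv0
  · rw [hv0]; simpa using mul_nonneg hB.le hc2
  · have hvpos : 0 < ‖v‖ := norm_pos_iff.mpr hv0
    have hs3 : 0 ≤ ∑ i ∈ t, ‖c i‖ * ‖⟪f i, v⟫_ℂ‖ :=
      Finset.sum_nonneg fun i _ => mul_nonneg (norm_nonneg _) (norm_nonneg _)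
    nlinarith [pow_pos hvpos 2, sq_nonneg (‖v‖^2)]

lemma synthesis_summable [CompleteSpace H] {f : ι → H} (hf : IsFrame f)
    {c : ι → ℂ} (hc : Summable fun i => ‖c i‖ ^ 2) :
    Summable (fun i => c i • f i) := by
  obtain ⟨A, B, hA, hB, hfr⟩ := hf
  have hsum := frame_summable ⟨A, B, hA, hB, hfr⟩
  rw [summable_iff_vanishing]
  intro e he
  obtain ⟨r, hr, hball⟩ := Metric.mem_nhds_iff.mp he
  have hr2 : (0:ℝ) < r ^ 2 / B := by positivity
  obtain ⟨s, hs⟩ := (summable_iff_vanishing.mp hc) (Set.Iio (r ^ 2 / B))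
    (Iio_mem_nhds hr2)
  refine ⟨s, fun t ht => ?_⟩
  have hb := synthesis_bound hB hsum (fun h => (hfr h).2) c t
  have h2 : ‖∑ i ∈ t, c i • f i‖ ^ 2 < r ^ 2 := by
    have := hs t ht
    simp only [Set.mem_Iio] at this
    calc ‖∑ i ∈ t, c i • f i‖ ^ 2 ≤ B * ∑ i ∈ t, ‖c i‖ ^ 2 := hb
    _ < B * (r ^ 2 / B) := by exact mul_lt_mul_of_pos_left this hB
    _ = r ^ 2 := by field_simp
  apply hball
  simp only [Metric.mem_ball, dist_zero_right]
  exact lt_of_pow_lt_pow_left₀ 2 hr.le h2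

variable [CompleteSpace H]

lemma frameOp_term_summable {f : ι → H} (hf : IsFrame f) (h : H) :
    Summable (fun i => (inner ℂ (f i) h : ℂ) • f i) :=
  synthesis_summable hf (frame_summable' hf h)

lemma inner_frameOp {f : ι → H} (hf : IsFrame f) (h g : H) :
    (inner ℂ g (frameOp f h) : ℂ) = ∑' i, (inner ℂ (f i) h : ℂ) * (inner ℂ g (f i) : ℂ) := by
  have h1 := (innerSL ℂ g).map_tsum (frameOp_term_summable hf h)
  calc (inner ℂ g (frameOp f h) : ℂ)
      = (innerSL ℂ g) (∑' i, (inner ℂ (f i) h : ℂ) • f i) := rfl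
    _ = ∑' i, (innerSL ℂ g) ((inner ℂ (f i) h : ℂ) • f i) := h1
    _ = ∑' i, (inner ℂ (f i) h : ℂ) * (inner ℂ g (f i) : ℂ) :=
        tsum_congr fun i => by rw [innerSL_apply_apply, inner_smul_right]

lemma inner_frameOp_self {f : ι → H} (hf : IsFrame f) (h : H) :
    (inner ℂ h (frameOp f h) : ℂ) = ((∑' i, ‖(inner ℂ h (f i) : ℂ)‖ ^ 2 : ℝ) : ℂ) := by
  rw [inner_frameOp hf h h, Complex.ofReal_tsum]
  refine tsum_congr fun i => ?_
  rw [← inner_conj_symm (f i) h, RCLike.conj_mul]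
  norm_num

lemma frameOp_injective {f : ι → H} (hf : IsFrame f) {x y : H}
    (hxy : frameOp f x = frameOp f y) : x = y := by
  have hz : frameOp f (x - y) = 0 := by
    have hsub : (fun i => (inner ℂ (f i) (x - y) : ℂ) • f i) =
        fun i => ((inner ℂ (f i) x : ℂ) • f i - (inner ℂ (f i) y : ℂ) • f i) := by
      funext i; rw [inner_sub_right, sub_smul]
    rw [frameOp, hsub, Summable.tsum_sub (frameOp_term_summable hf x) (frameOp_term_summable hf y)]
    rw [← frameOp, ← frameOp, hxy, sub_self]
  have h0 : ((∑' i, ‖(inner ℂ (x - y) (f i) : ℂ)‖ ^ 2 : ℝ) : ℂ) = 0 := by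
    rw [← inner_frameOp_self hf (x - y), hz, inner_zero_right]
  obtain ⟨A, B, hA, hB, hfr⟩ := hf
  have h1 := (hfr (x - y)).1
  rw [show (∑' i, ‖(inner ℂ (x - y) (f i) : ℂ)‖ ^ 2 : ℝ) = 0 from by exact_mod_cast h0] at h1
  have hs : ‖x - y‖ ^ 2 ≤ 0 := by nlinarith
  have h3 : x - y = 0 := by
    rw [← norm_eq_zero]
    have := sq_nonneg ‖x - y‖
    have h4 : ‖x - y‖ ^ 2 = 0 := le_antisymm hs this
    exact pow_eq_zero_iff (by norm_num) |>.mp h4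
  exact sub_eq_zero.mp h3

lemma dual_re_nonneg_le_one {i : ι} {f ftil : ι → H} (hf : IsFrame f)
    (hd : frameOp f (ftil i) = f i) :
    0 ≤ (inner ℂ (f i) (ftil i) : ℂ).re ∧ (inner ℂ (f i) (ftil i) : ℂ).re ≤ 1 := by
  set r : ℝ := ∑' j, ‖(inner ℂ (ftil i) (f j) : ℂ)‖ ^ 2 with hr
  have key : (inner ℂ (f i) (ftil i) : ℂ) = (r : ℂ) := by
    have hc : (inner ℂ (f i) (ftil i) : ℂ) = conj (inner ℂ (ftil i) (f i) : ℂ) :=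
      (inner_conj_symm _ _).symm
    rw [hc, ← hd, inner_frameOp_self hf (ftil i), Complex.conj_ofReal]
  have hsum := frame_summable hf (ftil i)
  have hr0 : 0 ≤ r := tsum_nonneg fun j => by positivity
  have hterm : (inner ℂ (ftil i) (f i) : ℂ) = (r : ℂ) := by
    rw [← hd]; exact inner_frameOp_self hf (ftil i)
  have hle : ‖(inner ℂ (ftil i) (f i) : ℂ)‖ ^ 2 ≤ r :=
    Summable.le_tsum hsum i fun j _ => by positivity
  rw [hterm] at hle
  simp only [Complex.norm_real, Real.norm_eq_abs, sq_abs] at hle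
  rw [key]
  simp only [Complex.ofReal_re]
  exact ⟨hr0, by nlinarith⟩

end Aux

section Aux2

variable {ι : Type*}
variable {H₁ : Type*} [NormedAddCommGroup H₁] [InnerProductSpace ℂ H₁]
variable {H₂ : Type*} [NormedAddCommGroup H₂] [InnerProductSpace ℂ H₂]

lemma norm_sq_complex (z : ℂ) : ‖z‖^2 = z.re^2 + z.im^2 := by
  rw [Complex.sq_norm, Complex.normSq_apply]; ring

lemma normsq_add_complex (a b : ℂ) :
    ‖a + b‖^2 = ‖a‖^2 + ‖b‖^2 + 2 * (conj a * b).re := by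
  simp only [norm_sq_complex, Complex.add_re, Complex.add_im, Complex.mul_re, Complex.conj_re,
    Complex.conj_im]
  ring

lemma l2_mul_summable {a b : ι → ℂ} (ha : Summable fun i => ‖a i‖ ^ 2)
    (hb : Summable fun i => ‖b i‖ ^ 2) : Summable (fun i => a i * b i) := by
  refine Summable.of_norm (Summable.of_nonneg_of_le (fun i => norm_nonneg _)
    (fun i => ?_) ((ha.add hb).mul_left (1/2 : ℝ)))
  rw [norm_mul]
  nlinarith [sq_nonneg (‖a i‖ - ‖b i‖), norm_nonneg (a i), norm_nonneg (b i)]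

lemma prod_norm_sq (x : WithLp 2 (H₁ × H₂)) : ‖x‖^2 = ‖x.fst‖^2 + ‖x.snd‖^2 := by
  have h1 := @inner_self_eq_norm_sq ℂ _ _ _ _ x
  have h2 := @inner_self_eq_norm_sq ℂ _ _ _ _ x.fst
  have h3 := @inner_self_eq_norm_sq ℂ _ _ _ _ x.snd
  rw [← h1, ← h2, ← h3, WithLp.prod_inner_apply, map_add]
  rfl

lemma inner_supersetFam (f₁ : ι → H₁) (f₂ : ι → H₂) (g : WithLp 2 (H₁ × H₂)) (i : ι) :
    (inner ℂ g (supersetFam f₁ f₂ i) : ℂ) = (inner ℂ g.fst (f₁ i) : ℂ) + (inner ℂ g.snd (f₂ i) : ℂ) :=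
  WithLp.prod_inner_apply g (supersetFam f₁ f₂ i)

lemma superset_cross_summable {f₁ : ι → H₁} {f₂ : ι → H₂} (hf₁ : IsFrame f₁) (hf₂ : IsFrame f₂)
    (g₁ : H₁) (g₂ : H₂) :
    Summable (fun i => conj (inner ℂ g₁ (f₁ i) : ℂ) * (inner ℂ g₂ (f₂ i) : ℂ)) :=
  l2_mul_summable (by simpa only [RCLike.norm_conj] using frame_summable hf₁ g₁)
    (frame_summable hf₂ g₂)

lemma superset_cross_zero {f₁ : ι → H₁} {f₂ : ι → H₂} (horth : SupersetOrthogonal f₁ f₂)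
    (g₁ : H₁) (g₂ : H₂) :
    ∑' i, conj (inner ℂ g₁ (f₁ i) : ℂ) * (inner ℂ g₂ (f₂ i) : ℂ) = 0 := by
  have : (fun i => conj (inner ℂ g₁ (f₁ i) : ℂ) * (inner ℂ g₂ (f₂ i) : ℂ)) =
      fun i => (inner ℂ (f₁ i) g₁ : ℂ) * (inner ℂ g₂ (f₂ i) : ℂ) := by
    funext i; rw [inner_conj_symm]
  rw [this]; exact horth g₁ g₂

lemma superset_tsum_eq {f₁ : ι → H₁} {f₂ : ι → H₂} (hf₁ : IsFrame f₁) (hf₂ : IsFrame f₂)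
    (horth : SupersetOrthogonal f₁ f₂) (g : WithLp 2 (H₁ × H₂)) :
    (∑' i, ‖(inner ℂ g (supersetFam f₁ f₂ i) : ℂ)‖ ^ 2) =
      (∑' i, ‖(inner ℂ g.fst (f₁ i) : ℂ)‖ ^ 2) + (∑' i, ‖(inner ℂ g.snd (f₂ i) : ℂ)‖ ^ 2) ∧
    Summable (fun i => ‖(inner ℂ g (supersetFam f₁ f₂ i) : ℂ)‖ ^ 2) := by
  set a : ι → ℂ := fun i => inner ℂ g.fst (f₁ i) with ha
  set b : ι → ℂ := fun i => inner ℂ g.snd (f₂ i) with hb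
  have hsa : Summable fun i => ‖a i‖ ^ 2 := frame_summable hf₁ g.fst
  have hsb : Summable fun i => ‖b i‖ ^ 2 := frame_summable hf₂ g.snd
  have hab : Summable (fun i => conj (a i) * b i) := superset_cross_summable hf₁ hf₂ g.fst g.snd
  have habre : Summable (fun i => 2 * ((conj (a i) * b i).re)) :=
    ((Complex.reCLM.summable hab)).mul_left 2
  have hpt : (fun i => ‖(inner ℂ g (supersetFam f₁ f₂ i) : ℂ)‖ ^ 2) =
      fun i => ‖a i‖ ^ 2 + ‖b i‖ ^ 2 + 2 * ((conj (a i) * b i).re) := by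
    funext i
    rw [inner_supersetFam]
    exact normsq_add_complex (a i) (b i)
  constructor
  · rw [hpt, Summable.tsum_add (hsa.add hsb) habre, Summable.tsum_add hsa hsb]
    have : ∑' i, 2 * ((conj (a i) * b i).re) = 0 := by
      rw [tsum_mul_left, ← Complex.re_tsum hab, superset_cross_zero horth g.fst g.snd]
      simp
    rw [this, add_zero]
  · rw [hpt]; exact (hsa.add hsb).add habre

lemma superset_isFrame {f₁ : ι → H₁} {f₂ : ι → H₂} (hf₁ : IsFrame f₁) (hf₂ : IsFrame f₂)
    (horth : SupersetOrthogonal f₁ f₂) : IsFrame (supersetFam f₁ f₂) := by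
  obtain ⟨A₁, B₁, hA₁, hB₁, hfr₁⟩ := hf₁
  obtain ⟨A₂, B₂, hA₂, hB₂, hfr₂⟩ := hf₂
  refine ⟨min A₁ A₂, B₁ + B₂, lt_min hA₁ hA₂, by positivity, fun g => ?_⟩
  have key := (superset_tsum_eq ⟨A₁, B₁, hA₁, hB₁, hfr₁⟩ ⟨A₂, B₂, hA₂, hB₂, hfr₂⟩ horth g).1
  rw [key, prod_norm_sq g]
  have h1 := hfr₁ g.fst
  have h2 := hfr₂ g.snd
  constructor
  · have hs := add_le_add h1.1 h2.1
    have hl := min_le_left A₁ A₂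
    have hr := min_le_right A₁ A₂
    nlinarith [sq_nonneg ‖g.fst‖, sq_nonneg ‖g.snd‖]
  · have hs := add_le_add h1.2 h2.2
    nlinarith [sq_nonneg ‖g.fst‖, sq_nonneg ‖g.snd‖, hB₁.le, hB₂.le]

lemma superset_dual_pair [CompleteSpace H₁] [CompleteSpace H₂]
    {f₁ ftil₁ : ι → H₁} {f₂ ftil₂ : ι → H₂}
    (hf₁ : IsFrame f₁) (hf₂ : IsFrame f₂) (horth : SupersetOrthogonal f₁ f₂)
    (hd₁ : ∀ i, frameOp f₁ (ftil₁ i) = f₁ i) (hd₂ : ∀ i, frameOp f₂ (ftil₂ i) = f₂ i) (i : ι) :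
    frameOp (supersetFam f₁ f₂) ((WithLp.equiv 2 (H₁ × H₂)).symm (ftil₁ i, ftil₂ i)) =
      supersetFam f₁ f₂ i := by
  set z := ((WithLp.equiv 2 (H₁ × H₂)).symm (ftil₁ i, ftil₂ i)) with hz
  have hfS := superset_isFrame hf₁ hf₂ horth
  refine ext_inner_left ℂ fun w => ?_
  rw [inner_frameOp hfS z w]
  have hterm : ∀ j, (inner ℂ (supersetFam f₁ f₂ j) z : ℂ) * (inner ℂ w (supersetFam f₁ f₂ j) : ℂ)
      = (inner ℂ (f₁ j) (ftil₁ i) : ℂ) * (inner ℂ w.fst (f₁ j) : ℂ)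
        + ((inner ℂ (f₁ j) (ftil₁ i) : ℂ) * (inner ℂ w.snd (f₂ j) : ℂ)
        + ((inner ℂ (f₂ j) (ftil₂ i) : ℂ) * (inner ℂ w.fst (f₁ j) : ℂ)
        + (inner ℂ (f₂ j) (ftil₂ i) : ℂ) * (inner ℂ w.snd (f₂ j) : ℂ))) := by
    intro j
    rw [WithLp.prod_inner_apply, WithLp.prod_inner_apply]
    simp only [WithLp.ofLp_fst, WithLp.ofLp_snd, show (supersetFam f₁ f₂ j).fst = f₁ j from rfl,
      show (supersetFam f₁ f₂ j).snd = f₂ j from rfl,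
      show z.fst = ftil₁ i from rfl, show z.snd = ftil₂ i from rfl]
    ring
  have sα : Summable fun j => ‖(inner ℂ (f₁ j) (ftil₁ i) : ℂ)‖^2 := frame_summable' hf₁ _
  have sβ : Summable fun j => ‖(inner ℂ (f₂ j) (ftil₂ i) : ℂ)‖^2 := frame_summable' hf₂ _
  have sw1 : Summable fun j => ‖(inner ℂ w.fst (f₁ j) : ℂ)‖^2 := frame_summable hf₁ _
  have sw2 : Summable fun j => ‖(inner ℂ w.snd (f₂ j) : ℂ)‖^2 := frame_summable hf₂ _
  have s1 := l2_mul_summable sα sw1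
  have s2 := l2_mul_summable sα sw2
  have s3 := l2_mul_summable sβ sw1
  have s4 := l2_mul_summable sβ sw2
  rw [tsum_congr hterm, Summable.tsum_add s1 (s2.add (s3.add s4)), Summable.tsum_add s2 (s3.add s4),
    Summable.tsum_add s3 s4]
  have hT1 : ∑' j, (inner ℂ (f₁ j) (ftil₁ i) : ℂ) * (inner ℂ w.fst (f₁ j) : ℂ)
      = (inner ℂ w.fst (f₁ i) : ℂ) := by
    rw [← inner_frameOp hf₁ (ftil₁ i) w.fst, hd₁ i]
  have hT4 : ∑' j, (inner ℂ (f₂ j) (ftil₂ i) : ℂ) * (inner ℂ w.snd (f₂ j) : ℂ)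
      = (inner ℂ w.snd (f₂ i) : ℂ) := by
    rw [← inner_frameOp hf₂ (ftil₂ i) w.snd, hd₂ i]
  have hT2 : ∑' j, (inner ℂ (f₁ j) (ftil₁ i) : ℂ) * (inner ℂ w.snd (f₂ j) : ℂ) = 0 :=
    horth (ftil₁ i) w.snd
  have hT3 : ∑' j, (inner ℂ (f₂ j) (ftil₂ i) : ℂ) * (inner ℂ w.fst (f₁ j) : ℂ) = 0 := by
    have h0 := horth w.fst (ftil₂ i)
    have hc : (fun j => (inner ℂ (f₂ j) (ftil₂ i) : ℂ) * (inner ℂ w.fst (f₁ j) : ℂ)) =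
        fun j => star ((inner ℂ (f₁ j) w.fst : ℂ) * (inner ℂ (ftil₂ i) (f₂ j) : ℂ)) := by
      funext j
      simp only [star_mul', RCLike.star_def, inner_conj_symm]
      ring
    rw [hc, ← tsum_star, h0, star_zero]
  rw [hT1, hT2, hT3, hT4, WithLp.prod_inner_apply]
  simp only [WithLp.ofLp_fst, WithLp.ofLp_snd, show (supersetFam f₁ f₂ i).fst = f₁ i from rfl,
    show (supersetFam f₁ f₂ i).snd = f₂ i from rfl]
  ring

end Aux2

section Aux3

variable {ι : Type*} {H : Type*} [NormedAddCommGroup H] [InnerProductSpace ℂ H]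
  [CompleteSpace H]

lemma aSeq_mem_Icc {f ftil : ι → H} (hf : IsFrame f)
    (hd : ∀ i, frameOp f (ftil i) = f i) (In : ℕ → Finset ι) (n : ℕ) :
    bSeq In f ftil n / ((In n).card : ℝ) ∈ Set.Icc (0:ℝ) 1 := by
  have hb0 : 0 ≤ bSeq In f ftil n := by
    rw [bSeq, Complex.re_sum]
    exact Finset.sum_nonneg fun i _ => (dual_re_nonneg_le_one hf (hd i)).1
  have hb1 : bSeq In f ftil n ≤ ((In n).card : ℝ) := by
    rw [bSeq, Complex.re_sum]
    calc ∑ i ∈ In n, (inner ℂ (f i) (ftil i) : ℂ).re ≤ ∑ _i ∈ In n, (1:ℝ) :=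
      Finset.sum_le_sum fun i _ => (dual_re_nonneg_le_one hf (hd i)).2
    _ = ((In n).card : ℝ) := by simp
  rcases Nat.eq_zero_or_pos (In n).card with h0 | hpos
  · rw [h0]; simp
  · have hcp : (0:ℝ) < ((In n).card : ℝ) := by exact_mod_cast hpos
    exact ⟨div_nonneg hb0 hcp.le, (div_le_one hcp).mpr hb1⟩

lemma ulim_exists_of_mem_Icc {x : ℕ → ℝ} (hx : ∀ n, x n ∈ Set.Icc (0:ℝ) 1)
    (p : Ultrafilter ℕ) : ∃ L, Tendsto x (↑p : Filter ℕ) (nhds L) := by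
  obtain ⟨L, _, hle⟩ := (isCompact_Icc (a := (0:ℝ)) (b := 1)).ultrafilter_le_nhds
    (p.map x) (by
      rw [Ultrafilter.coe_map, le_principal_iff, mem_map]
      exact Filter.univ_mem' hx)
  refine ⟨L, ?_⟩
  rwa [Ultrafilter.coe_map] at hle

end Aux3

/-- If frames `F¹ ⊆ H₁` and `F² ⊆ H₂` are orthogonal in the sense of
supersets, then `F¹ ⊕ F²` is a frame for `H₁ ⊕ H₂` and
`μ(F¹ ⊕ F²)(p) = μ(F¹)(p) + μ(F²)(p)` for every free ultrafilter `p`. -/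
theorem stmt5 {ι : Type*} [Countable ι] [Infinite ι]
    {H₁ : Type*} [NormedAddCommGroup H₁] [InnerProductSpace ℂ H₁] [CompleteSpace H₁]
    {H₂ : Type*} [NormedAddCommGroup H₂] [InnerProductSpace ℂ H₂] [CompleteSpace H₂]
    (In : ℕ → Finset ι) (hmono : Monotone In) (hcover : ∀ i : ι, ∃ n, i ∈ In n)
    (f₁ ftil₁ : ι → H₁) (hf₁ : IsFrame f₁) (hdual₁ : IsCanonicalDual f₁ ftil₁)
    (f₂ ftil₂ : ι → H₂) (hf₂ : IsFrame f₂) (hdual₂ : IsCanonicalDual f₂ ftil₂)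
    (horth : SupersetOrthogonal f₁ f₂) :
    IsFrame (supersetFam f₁ f₂) ∧
    ∀ ftilS : ι → WithLp 2 (H₁ × H₂),
      IsCanonicalDual (supersetFam f₁ f₂) ftilS →
      ∀ p : Ultrafilter ℕ, p.IsFree →
        muU In (supersetFam f₁ f₂) ftilS p =
          muU In f₁ ftil₁ p + muU In f₂ ftil₂ p := by
  have hfS := superset_isFrame hf₁ hf₂ horth
  refine ⟨hfS, ?_⟩
  intro ftilS hdualS p hfree
  have hpair : ∀ i, ftilS i = (WithLp.equiv 2 (H₁ × H₂)).symm (ftil₁ i, ftil₂ i) := by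
    intro i
    refine frameOp_injective hfS ?_
    rw [hdualS i, superset_dual_pair hf₁ hf₂ horth hdual₁ hdual₂ i]
  have hb : ∀ n, bSeq In (supersetFam f₁ f₂) ftilS n =
      bSeq In f₁ ftil₁ n + bSeq In f₂ ftil₂ n := by
    intro n
    have hterm : ∀ i ∈ In n, (inner ℂ (supersetFam f₁ f₂ i) (ftilS i) : ℂ) =
        (inner ℂ (f₁ i) (ftil₁ i) : ℂ) + (inner ℂ (f₂ i) (ftil₂ i) : ℂ) := by
      intro i _
      rw [hpair i, WithLp.prod_inner_apply]
      rfl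
    simp only [bSeq]
    rw [Finset.sum_congr rfl hterm, Finset.sum_add_distrib, Complex.add_re]
  obtain ⟨L₁, hL₁⟩ := ulim_exists_of_mem_Icc (aSeq_mem_Icc hf₁ hdual₁ In) p
  obtain ⟨L₂, hL₂⟩ := ulim_exists_of_mem_Icc (aSeq_mem_Icc hf₂ hdual₂ In) p
  have e1 : muU In f₁ ftil₁ p = L₁ := hL₁.limUnder_eq
  have e2 : muU In f₂ ftil₂ p = L₂ := hL₂.limUnder_eq
  have e3 : muU In (supersetFam f₁ f₂) ftilS p = L₁ + L₂ := by
    have hfun : (fun n => bSeq In (supersetFam f₁ f₂) ftilS n / ((In n).card : ℝ)) =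
        fun n => bSeq In f₁ ftil₁ n / ((In n).card : ℝ) +
          bSeq In f₂ ftil₂ n / ((In n).card : ℝ) := by
      funext n; rw [hb n, add_div]
    rw [muU, ulim, hfun]
    exact (hL₁.add hL₂).limUnder_eq
  rw [e1, e2, e3]


end
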